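/- For κ ≥ 0 and s > 0, the binary DPSK error probability E(κ, s) = (1+κ)/(2(1+κ+s)) · exp(−κs/(κ+s)) is strictly decreasing in s for each fixed κ ≥ 0. -/
import Mathlib


/-- The binary DPSK error probability
E(κ,s) = (1+κ)/(2(1+κ+s)) · exp(−κs/(κ+s)) is strictly decreasing in the
SNR s on (0,∞) for each fixed κ ≥ 0. -/
theorem dpsk_error_strictAnti_in_snr (κ : ℝ) (hκ : 0 ≤ κ) :
    StrictAntiOn
      (fun s => (1 + κ) / (2 * (1 + κ + s)) * Real.exp (-(κ * s) / (κ + s)))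
      (Set.Ioi 0) := by
  intro a ha b hb hab
  simp only [Set.mem_Ioi] at ha hb
  have hka : 0 < κ + a := by linarith
  have hkb : 0 < κ + b := by linarith
  have h1a : 0 < 2 * (1 + κ + a) := by linarith
  have h1b : 0 < 2 * (1 + κ + b) := by linarith
  have hfrac : (1 + κ) / (2 * (1 + κ + b)) < (1 + κ) / (2 * (1 + κ + a)) :=
    div_lt_div_of_pos_left (by linarith) h1a (by linarith)
  have hexp : Real.exp (-(κ * b) / (κ + b)) ≤ Real.exp (-(κ * a) / (κ + a)) := by
    apply Real.exp_le_exp.mpr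
    rw [div_le_div_iff₀ hkb hka]
    nlinarith [mul_nonneg (mul_nonneg hκ hκ) (le_of_lt (sub_pos.mpr hab))]
  calc (1 + κ) / (2 * (1 + κ + b)) * Real.exp (-(κ * b) / (κ + b))
      ≤ (1 + κ) / (2 * (1 + κ + b)) * Real.exp (-(κ * a) / (κ + a)) := by
        apply mul_le_mul_of_nonneg_left hexp (by positivity)
    _ < (1 + κ) / (2 * (1 + κ + a)) * Real.exp (-(κ * a) / (κ + a)) :=
        mul_lt_mul_of_pos_right hfrac (Real.exp_pos _)
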